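/- Let m : Fin p → ℕ be block sizes with p ≥ 1, and let α, β ≥ 0 with γ = β. Define the ordered-tree completion cost recursively: a singleton costs 0, and a tree over a consecutive range splits into two consecutive subranges with cost max of the two subtree costs plus α + β·(size of the sent subrange). Then for every p ≥ 1 there exists such a recursive tree over the full range [0, p) with completion cost at most ⌈log₂ p⌉·α + β·(∑ i, m i). -/
import Mathlib


open Finset

/-- `OrdCost m α β i j c` holds when there is a (strongly) ordered gather/scatter
communication tree over the consecutive processor range `[i, j]` with completion cost `c`:
a singleton range costs `0`, and a range splits into two consecutive subranges, costing
the maximum of the two subtree costs plus `α + β * (size of the sent subrange)`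
(the sent subrange may be either the right or the left part). -/
inductive OrdCost (m : ℕ → ℕ) (α β : ℝ) : ℕ → ℕ → ℝ → Prop
  | single (i : ℕ) : OrdCost m α β i i 0
  | joinRight {i k j : ℕ} {c₁ c₂ : ℝ} (hik : i ≤ k) (hkj : k < j)
      (h₁ : OrdCost m α β i k c₁) (h₂ : OrdCost m α β (k + 1) j c₂) :
      OrdCost m α β i j (max c₁ c₂ + α + β * ∑ t ∈ Icc (k + 1) j, (m t : ℝ))
  | joinLeft {i k j : ℕ} {c₁ c₂ : ℝ} (hik : i ≤ k) (hkj : k < j)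
      (h₁ : OrdCost m α β i k c₁) (h₂ : OrdCost m α β (k + 1) j c₂) :
      OrdCost m α β i j (max c₁ c₂ + α + β * ∑ t ∈ Icc i k, (m t : ℝ))

lemma sum_Icc_split (f : ℕ → ℝ) {a b c : ℕ} (h1 : a ≤ b) (h2 : b ≤ c) :
    ∑ t ∈ Icc a c, f t = (∑ t ∈ Icc a b, f t) + ∑ t ∈ Icc (b + 1) c, f t := by
  rw [Finset.Icc_add_one_left_eq_Ioc, ← Finset.sum_union (by simp [Finset.disjoint_left]; omega)]
  congr 1
  ext x
  simp only [Finset.mem_union, Finset.mem_Icc, Finset.mem_Ioc]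
  omega

lemma ordcost_aux (m : ℕ → ℕ) (α β : ℝ) (hα : 0 ≤ α) (hβ : 0 ≤ β) :
    ∀ n, 1 ≤ n → ∀ i, ∃ c, OrdCost m α β i (i + n - 1) c ∧
      c ≤ (Nat.clog 2 n : ℝ) * α + β * ∑ t ∈ Icc i (i + n - 1), (m t : ℝ) := by
  intro n
  induction n using Nat.strong_induction_on with
  | _ n ih =>
    intro hn i
    rcases eq_or_lt_of_le hn with h1 | h2
    · -- n = 1
      refine ⟨0, ?_, ?_⟩
      · have : i + n - 1 = i := by omega
        rw [this]; exact OrdCost.single i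
      · have hs : 0 ≤ ∑ t ∈ Icc i (i + n - 1), (m t : ℝ) :=
          Finset.sum_nonneg fun t _ => by positivity
      -- clog term nonneg
        positivity
    · -- n ≥ 2
      set a := (n + 1) / 2 with ha
      have ha1 : 1 ≤ a := by omega
      have han : a < n := by omega
      set b := n - a with hb
      have hb1 : 1 ≤ b := by omega
      have hba : b ≤ a := by omega
      have hclog : Nat.clog 2 n = Nat.clog 2 a + 1 := by
        have := Nat.clog_of_two_le (b := 2) (n := n) (by norm_num) h2
        simpa [ha] using this
      obtain ⟨c₁, hc₁, hc₁le⟩ := ih a han ha1 i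
      obtain ⟨c₂, hc₂, hc₂le⟩ := ih b (by omega) hb1 (i + a)
      set k := i + a - 1 with hk
      have hk1 : k + 1 = i + a := by omega
      have hik : i ≤ k := by omega
      have hkj : k < i + n - 1 := by omega
      have hjr : i + a + b - 1 = i + n - 1 := by omega
      rw [hjr] at hc₂ hc₂le
      rw [← hk1] at hc₂ hc₂le
      set SL := ∑ t ∈ Icc i k, (m t : ℝ) with hSL
      set SR := ∑ t ∈ Icc (k + 1) (i + n - 1), (m t : ℝ) with hSR
      have hSLnn : 0 ≤ SL := Finset.sum_nonneg fun t _ => by positivity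
      have hSRnn : 0 ≤ SR := Finset.sum_nonneg fun t _ => by positivity
      have hsum : ∑ t ∈ Icc i (i + n - 1), (m t : ℝ) = SL + SR :=
        sum_Icc_split _ hik (le_of_lt hkj)
      have hclogb : (Nat.clog 2 b : ℝ) ≤ (Nat.clog 2 a : ℝ) := by
        exact_mod_cast Nat.clog_mono_right 2 hba
      have hmaxle : max c₁ c₂ ≤ (Nat.clog 2 a : ℝ) * α + β * max SL SR := by
        apply max_le
        · refine hc₁le.trans ?_
          gcongr
          exact le_max_left _ _
        · refine hc₂le.trans ?_
          gcongr
          exact le_max_right _ _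
      rcases le_total SL SR with hLR | hRL
      · refine ⟨_, OrdCost.joinLeft hik hkj hc₁ hc₂, ?_⟩
        rw [hsum, hclog]
        have : max SL SR = SR := max_eq_right hLR
        push_cast
        nlinarith [hmaxle, this]
      · refine ⟨_, OrdCost.joinRight hik hkj hc₁ hc₂, ?_⟩
        rw [hsum, hclog]
        have : max SL SR = SL := max_eq_left hRL
        push_cast
        nlinarith [hmaxle, this]

/-- Proposition 1: for every `p ≥ 1` there is an ordered recursive (adaptive binomial)
tree over the full range `[0, p)` with completion cost at most
`⌈log₂ p⌉ * α + β * ∑ i, m i`. -/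
theorem stmt_1 (p : ℕ) (hp : 1 ≤ p) (m : ℕ → ℕ) (α β γ : ℝ)
    (hα : 0 ≤ α) (hβ : 0 ≤ β) (hγ : γ = β) :
    ∃ c : ℝ, OrdCost m α β 0 (p - 1) c ∧
      c ≤ (Nat.clog 2 p : ℝ) * α + β * ∑ i ∈ range p, (m i : ℝ) := by
  obtain ⟨c, hc, hle⟩ := ordcost_aux m α β hα hβ p hp 0
  refine ⟨c, by simpa using hc, ?_⟩
  have : range p = Icc 0 (p - 1) := by
    ext x; simp only [mem_range, mem_Icc]; omega
  rw [this]
  simpa using hle
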